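/- For p ∈ (0,1) and q < 0 (more generally pq ≤ 0), the Gini mean G_{p,q} is monotone: it is nondecreasing in each of its variables on finite tuples of positive reals. -/
import Mathlib


open Finset in
/-- The Gini mean `G_{p,q}` of a tuple of positive reals. -/
noncomputable def gini (p q : ℝ) (n : ℕ) (a : Fin n → ℝ) : ℝ :=
  if p = q then
    Real.exp ((∑ i, a i ^ p * Real.log (a i)) / (∑ i, a i ^ p))
  else
    ((∑ i, a i ^ p) / (∑ i, a i ^ q)) ^ (1 / (p - q))

open Finset in
lemma gini_symm (p q : ℝ) (hne : p ≠ q) (n : ℕ) (a : Fin n → ℝ)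
    (hpos : 0 < ∑ i, a i ^ p) (hqos : 0 < ∑ i, a i ^ q) :
    gini p q n a = gini q p n a := by
  rw [gini, gini, if_neg hne, if_neg (Ne.symm hne)]
  rw [show (1 : ℝ) / (q - p) = -(1 / (p - q)) by rw [one_div, one_div, ← inv_neg, neg_sub],
    Real.rpow_neg (by positivity), ← Real.inv_rpow (by positivity), inv_div]

open Finset in
lemma gini_mono_of_lt (p q : ℝ) (hp : 0 ≤ p) (hq : q ≤ 0) (hlt : q < p)
    (n : ℕ) (a b : Fin (n + 1) → ℝ) (ha : ∀ i, 0 < a i) (hab : ∀ i, a i ≤ b i) :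
    gini p q (n + 1) a ≤ gini p q (n + 1) b := by
  have hb : ∀ i, 0 < b i := fun i => (ha i).trans_le (hab i)
  rw [gini, gini, if_neg hlt.ne', if_neg hlt.ne']
  have h1 : ∑ i, a i ^ p ≤ ∑ i, b i ^ p :=
    Finset.sum_le_sum fun i _ => Real.rpow_le_rpow (ha i).le (hab i) hp
  have h2 : ∑ i, b i ^ q ≤ ∑ i, a i ^ q :=
    Finset.sum_le_sum fun i _ => Real.rpow_le_rpow_of_nonpos (ha i) (hab i) hq
  have hpa : 0 < ∑ i, a i ^ p :=
    Finset.sum_pos (fun i _ => Real.rpow_pos_of_pos (ha i) _) Finset.univ_nonempty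
  have hpb : 0 < ∑ i, b i ^ p :=
    Finset.sum_pos (fun i _ => Real.rpow_pos_of_pos (hb i) _) Finset.univ_nonempty
  have hqa : 0 < ∑ i, a i ^ q :=
    Finset.sum_pos (fun i _ => Real.rpow_pos_of_pos (ha i) _) Finset.univ_nonempty
  have hqb : 0 < ∑ i, b i ^ q :=
    Finset.sum_pos (fun i _ => Real.rpow_pos_of_pos (hb i) _) Finset.univ_nonempty
  apply Real.rpow_le_rpow (div_nonneg hpa.le hqa.le) _ (one_div_nonneg.mpr (sub_nonneg.mpr hlt.le))
  exact div_le_div₀ hpb.le h1 hqb h2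

theorem stmt_18 (p q : ℝ) (hpq : p * q ≤ 0)
    (n : ℕ) (a b : Fin (n + 1) → ℝ) (ha : ∀ i, 0 < a i) (hab : ∀ i, a i ≤ b i) :
    gini p q (n + 1) a ≤ gini p q (n + 1) b := by
  have hb : ∀ i, 0 < b i := fun i => (ha i).trans_le (hab i)
  rcases eq_or_ne p q with heq | hne
  · subst heq
    have hp0 : p = 0 := by nlinarith [mul_self_nonneg p]
    subst hp0
    rw [gini, gini, if_pos rfl, if_pos rfl]
    simp only [Real.rpow_zero, one_mul]
    rw [Finset.sum_const, Finset.card_univ, Fintype.card_fin, nsmul_eq_mul, mul_one]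
    apply Real.exp_le_exp.mpr
    apply div_le_div_of_nonneg_right _ (by positivity)
    exact Finset.sum_le_sum fun i _ => Real.log_le_log (ha i) (hab i)
  · have hsum : ∀ (r : ℝ) (c : Fin (n+1) → ℝ), (∀ i, 0 < c i) → 0 < ∑ i, c i ^ r :=
      fun r c hc => Finset.sum_pos (fun i _ => Real.rpow_pos_of_pos (hc i) _) Finset.univ_nonempty
    rcases lt_or_gt_of_ne hne with h | h
    · -- q > p : swap
      have hp : p ≤ 0 := by nlinarith
      have hq : 0 ≤ q := by nlinarith
      rw [gini_symm p q hne _ a (hsum p a ha) (hsum q a ha),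
        gini_symm p q hne _ b (hsum p b hb) (hsum q b hb)]
      exact gini_mono_of_lt q p hq hp h n a b ha hab
    · have hq : q ≤ 0 := by nlinarith
      have hp : 0 ≤ p := by nlinarith
      exact gini_mono_of_lt p q hp hq h n a b ha hab
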